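/- arXiv:0909.4469 — 4 statements merged into one kernel-verified Lean document; each statement's English description precedes it below -/
import Mathlib

section
/- Let P_1(s,t) = ẏ_s·x_s − (q_0/p)·y_s·ẋ_s, where dot denotes d/dt. If for some s the Puiseux expansion is y_s = c_0(s)x_s^{q_0/p} + c_1(s)x_s^{q_1/p} + (higher terms), with ord_t x_s = p, then ord_t P_1(s,·) = q_1 + p − 1 whenever c_1(s)≠0, and ord_t P_1(s,·) ≥ q_1 + p − 1 in general. -/
open PowerSeries

/-- Formal derivative d/dt of a power series. -/
noncomputable def pderiv' (f : PowerSeries ℂ) : PowerSeries ℂ :=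
  PowerSeries.mk fun n => ((n : ℂ) + 1) * coeff (n + 1) f

lemma pderiv'_eq_derivative (f : PowerSeries ℂ) : pderiv' f = derivative ℂ f := by
  ext n
  simp [pderiv', coeff_derivative]
  ring

lemma aux_coeff_pow_lt (ξ : PowerSeries ℂ) (hξ0 : constantCoeff ξ = 0) {m k : ℕ} (h : m < k) :
    coeff m (ξ ^ k) = 0 := by
  have hd : (X : PowerSeries ℂ) ^ k ∣ ξ ^ k :=
    pow_dvd_pow_of_dvd (PowerSeries.X_dvd_iff.2 hξ0) k
  exact PowerSeries.X_pow_dvd_iff.1 hd m h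

lemma aux_coeff_mul_pow (ξ : PowerSeries ℂ) (hξ0 : constantCoeff ξ = 0)
    (f : PowerSeries ℂ) (n : ℕ) :
    coeff n (ξ ^ n * f) = coeff n (ξ ^ n) * coeff 0 f := by
  rw [coeff_mul]
  rw [Finset.sum_eq_single (n, 0)]
  · intro b hb hne
    rw [Finset.HasAntidiagonal.mem_antidiagonal] at hb
    have : b.1 < n := by
      rcases lt_or_ge b.1 n with h | h
      · exact h
      · exfalso; apply hne
        have : b.1 = n := le_antisymm (by omega) h
        have : b.2 = 0 := by omega
        exact Prod.ext (by omega) this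
    rw [aux_coeff_pow_lt ξ hξ0 this, zero_mul]
  · intro h; exact absurd (Finset.HasAntidiagonal.mem_antidiagonal.2 (by omega)) h

lemma aux_coeff_pow_self (ξ : PowerSeries ℂ) (hξ0 : constantCoeff ξ = 0) (n : ℕ) :
    coeff n (ξ ^ n) = (coeff 1 ξ) ^ n := by
  induction n with
  | zero => simp
  | succ n ih =>
    have : ξ ^ (n + 1) = ξ ^ n * ξ := pow_succ ξ n
    rw [this, coeff_mul, Finset.sum_eq_single (n, 1)]
    · rw [ih, pow_succ]
    · intro b hb hne
      rw [Finset.HasAntidiagonal.mem_antidiagonal] at hb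
      rcases lt_or_ge b.1 n with h | h
      · rw [aux_coeff_pow_lt ξ hξ0 h, zero_mul]
      · rcases eq_or_lt_of_le h with h2 | h2
        · exact absurd (Prod.ext h2.symm (by omega)) hne
        · have : b.2 = 0 := by omega
          rw [this, PowerSeries.coeff_zero_eq_constantCoeff, hξ0, mul_zero]
    · intro h; exact absurd (Finset.HasAntidiagonal.mem_antidiagonal.2 (by omega)) h

lemma aux_dpow (ξ : PowerSeries ℂ) (m : ℕ) :
    derivative ℂ (ξ ^ m) * ξ = C (m : ℂ) * (ξ ^ m * derivative ℂ ξ) := by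
  induction m with
  | zero => simp
  | succ m ih =>
    have h : derivative ℂ (ξ ^ (m + 1)) = ξ ^ m * derivative ℂ ξ + ξ * derivative ℂ (ξ ^ m) := by
      rw [pow_succ, Derivation.leibniz]
      simp [smul_eq_mul]
    rw [h]
    have hc : (C ((m : ℂ) + 1)) = C (m : ℂ) + 1 := by
      rw [map_add, map_one]
    push_cast
    rw [hc]
    ring_nf
    linear_combination ξ * ih

lemma aux_F_pow (ξ : PowerSeries ℂ) (hξ1 : coeff 1 ξ ≠ 0) (p q0 : ℕ) (hp : 1 ≤ p) (k : ℕ) :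
    derivative ℂ (ξ ^ k) * ξ ^ p - C ((q0 : ℂ) / p) * ξ ^ k * derivative ℂ (ξ ^ p)
      = C ((k : ℂ) - q0) * (ξ ^ (k + p - 1) * derivative ℂ ξ) := by
  have hξne : ξ ≠ 0 := fun h => hξ1 (by simp [h])
  have hps : (p : ℂ) ≠ 0 := Nat.cast_ne_zero.2 (by omega)
  have hC : (C ((q0 : ℂ) / p)) * C (p : ℂ) = C (q0 : ℂ) := by
    rw [← map_mul]; congr 1; field_simp
  have hCk : C ((k : ℂ) - q0) = C (k : ℂ) - C (q0 : ℂ) := map_sub _ _ _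
  have h1 := aux_dpow ξ k
  have h2 := aux_dpow ξ p
  have hadd : ξ ^ k * ξ ^ p = ξ ^ (k + p) := (pow_add ξ k p).symm
  have hpow : ξ ^ (k + p - 1) * ξ = ξ ^ (k + p) := by
    rw [← pow_succ, show k + p - 1 + 1 = k + p from by omega]
  apply mul_right_cancel₀ hξne
  calc (derivative ℂ (ξ ^ k) * ξ ^ p - C ((q0 : ℂ) / p) * ξ ^ k * derivative ℂ (ξ ^ p)) * ξ
      = (derivative ℂ (ξ ^ k) * ξ) * ξ ^ p
        - C ((q0 : ℂ) / p) * ξ ^ k * (derivative ℂ (ξ ^ p) * ξ) := by ring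
    _ = (C (k : ℂ)) * (ξ ^ k * derivative ℂ ξ) * ξ ^ p
        - C ((q0 : ℂ) / p) * ξ ^ k * (C (p : ℂ) * (ξ ^ p * derivative ℂ ξ)) := by
        rw [h1, h2]
    _ = C (k : ℂ) * (ξ ^ (k + p) * derivative ℂ ξ)
        - (C ((q0 : ℂ) / p) * C (p : ℂ)) * (ξ ^ (k + p) * derivative ℂ ξ) := by
        linear_combination (C (k : ℂ) * derivative ℂ ξ
          - C ((q0 : ℂ) / p) * C (p : ℂ) * derivative ℂ ξ) * hadd
    _ = C ((k : ℂ) - q0) * (ξ ^ (k + p - 1) * derivative ℂ ξ) * ξ := by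
        rw [hC, hCk]
        linear_combination (C (k : ℂ) - C (q0 : ℂ)) * derivative ℂ ξ * hpow.symm

lemma aux_coeff_P (p q0 : ℕ) (hp : 1 ≤ p) (ξ y : PowerSeries ℂ) (c : ℕ → ℂ)
    (hξ0 : constantCoeff ξ = 0) (hξ1 : coeff 1 ξ ≠ 0)
    (hpuis : ∀ n, coeff n y =
      ∑ k ∈ Finset.range (n + 1), c k * coeff n (ξ ^ k)) (n : ℕ) :
    coeff n (derivative ℂ y * ξ ^ p - C ((q0 : ℂ) / p) * y * derivative ℂ (ξ ^ p))
      = ∑ k ∈ Finset.range (n + 2),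
          c k * (((k : ℂ) - q0) * coeff n (ξ ^ (k + p - 1) * derivative ℂ ξ)) := by
  classical
  set yN : PowerSeries ℂ := ∑ k ∈ Finset.range (n + 2), C (c k) * ξ ^ k with hyN
  have aux_pow_lt : ∀ m k : ℕ, m < k → coeff m (ξ ^ k) = 0 := by
    intro m k h
    exact PowerSeries.X_pow_dvd_iff.1
      (pow_dvd_pow_of_dvd (PowerSeries.X_dvd_iff.2 hξ0) k) m h
  have hcm : ∀ m, m ≤ n + 1 → coeff m y = coeff m yN := by
    intro m hm
    rw [hyN, map_sum, hpuis m]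
    rw [Finset.sum_subset (Finset.range_subset_range.2 (show m + 1 ≤ n + 2 by omega))]
    · apply Finset.sum_congr rfl
      intro k _
      rw [coeff_C_mul]
    · intro k hk hk2
      rw [Finset.mem_range] at hk hk2
      rw [aux_pow_lt m k (by omega), mul_zero]
  have hz : ∀ m, m ≤ n + 1 → coeff m (y - yN) = 0 := by
    intro m hm; rw [map_sub, hcm m hm, sub_self]
  have hdiff : coeff n
      (derivative ℂ (y - yN) * ξ ^ p - C ((q0 : ℂ) / p) * (y - yN) * derivative ℂ (ξ ^ p))
        = 0 := by
    rw [map_sub]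
    have h1 : coeff n (derivative ℂ (y - yN) * ξ ^ p) = 0 := by
      rw [coeff_mul]
      apply Finset.sum_eq_zero
      intro b hb
      rw [Finset.HasAntidiagonal.mem_antidiagonal] at hb
      rw [coeff_derivative, hz (b.1 + 1) (by omega), zero_mul, zero_mul]
    have h2 : coeff n (C ((q0 : ℂ) / p) * (y - yN) * derivative ℂ (ξ ^ p)) = 0 := by
      rw [mul_assoc, coeff_C_mul, coeff_mul]
      rw [Finset.sum_eq_zero, mul_zero]
      intro b hb
      rw [Finset.HasAntidiagonal.mem_antidiagonal] at hb
      rw [hz b.1 (by omega), zero_mul]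
    rw [h1, h2, sub_zero]
  have hsplit : derivative ℂ y * ξ ^ p - C ((q0 : ℂ) / p) * y * derivative ℂ (ξ ^ p)
      = (derivative ℂ (y - yN) * ξ ^ p
          - C ((q0 : ℂ) / p) * (y - yN) * derivative ℂ (ξ ^ p))
        + (derivative ℂ yN * ξ ^ p - C ((q0 : ℂ) / p) * yN * derivative ℂ (ξ ^ p)) := by
    rw [map_sub]
    ring
  rw [hsplit, map_add, hdiff, zero_add]
  have hgN : derivative ℂ yN * ξ ^ p - C ((q0 : ℂ) / p) * yN * derivative ℂ (ξ ^ p)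
      = ∑ k ∈ Finset.range (n + 2),
          C (c k) * (C ((k : ℂ) - q0) * (ξ ^ (k + p - 1) * derivative ℂ ξ)) := by
    have hD : derivative ℂ yN = ∑ k ∈ Finset.range (n + 2), C (c k) * derivative ℂ (ξ ^ k) := by
      rw [hyN, map_sum]
      apply Finset.sum_congr rfl
      intro k _
      rw [← smul_eq_C_mul, ← smul_eq_C_mul, Derivation.map_smul]
    rw [hD, hyN, Finset.sum_mul, Finset.mul_sum, Finset.sum_mul, ← Finset.sum_sub_distrib]
    apply Finset.sum_congr rfl
    intro k _
    rw [← aux_F_pow ξ hξ1 p q0 hp k]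
    ring
  rw [hgN, map_sum]
  apply Finset.sum_congr rfl
  intro k _
  rw [coeff_C_mul, coeff_C_mul]

/-- Let P₁ = ẏ·x − (q₀/p)·y·ẋ. If y has the Puiseux expansion
y = c₀x^{q₀/p} + c₁x^{q₁/p} + (higher terms) with ord_t x = p (so x = ξᵖ with
ord ξ = 1), then ord_t P₁ = q₁+p−1 whenever c₁ ≠ 0 (here c₁ = c q₁), and
ord_t P₁ ≥ q₁+p−1 in general. -/
theorem stmt7 (p q0 q1 : ℕ) (hp : 1 < p) (hq : q0 < q1)
    (x y ξ : PowerSeries ℂ) (c : ℕ → ℂ)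
    (hξ0 : constantCoeff ξ = 0) (hξ1 : coeff 1 ξ ≠ 0)
    (hξp : ξ ^ p = x)
    (hpuis : ∀ n, coeff n y =
      ∑ k ∈ Finset.range (n + 1), c k * coeff n (ξ ^ k))
    (hlow : ∀ k, k < q0 → c k = 0)
    (hmid : ∀ k, q0 < k → k < q1 → c k = 0)
    (hc0 : c q0 ≠ 0) :
    (c q1 ≠ 0 →
      (pderiv' y * x - (C ((q0 : ℂ) / p)) * y * pderiv' x).order
        = (q1 + p - 1 : ℕ)) ∧
    ((q1 + p - 1 : ℕ) : ℕ∞) ≤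
      (pderiv' y * x - (C ((q0 : ℂ) / p)) * y * pderiv' x).order := by
  subst hξp
  rw [pderiv'_eq_derivative, pderiv'_eq_derivative]
  set n0 : ℕ := q1 + p - 1 with hn0
  set g : PowerSeries ℂ :=
    derivative ℂ y * ξ ^ p - C ((q0 : ℂ) / p) * y * derivative ℂ (ξ ^ p) with hg
  have key : ∀ n, coeff n g = ∑ k ∈ Finset.range (n + 2),
      c k * (((k : ℂ) - q0) * coeff n (ξ ^ (k + p - 1) * derivative ℂ ξ)) :=
    aux_coeff_P p q0 (le_of_lt hp) ξ y c hξ0 hξ1 hpuis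
  -- each summand vanishes except possibly k = q1 at n = n0
  have hterm : ∀ n k : ℕ, n ≤ n0 → k ≠ q1 →
      c k * (((k : ℂ) - q0) * coeff n (ξ ^ (k + p - 1) * derivative ℂ ξ)) = 0 := by
    intro n k hn hk
    rcases lt_trichotomy k q0 with h | h | h
    · rw [hlow k h, zero_mul]
    · subst h
      simp
    · rcases lt_or_ge k q1 with h2 | h2
      · rw [hmid k h h2, zero_mul]
      · have h3 : q1 < k := lt_of_le_of_ne h2 (Ne.symm hk)
        have h4 : n < k + p - 1 := by omega
        have hc : coeff n (ξ ^ (k + p - 1) * derivative ℂ ξ) = 0 := by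
          have hd : (X : PowerSeries ℂ) ^ (k + p - 1) ∣ ξ ^ (k + p - 1) * derivative ℂ ξ :=
            dvd_mul_of_dvd_left
              (pow_dvd_pow_of_dvd (PowerSeries.X_dvd_iff.2 hξ0) _) _
          exact PowerSeries.X_pow_dvd_iff.1 hd n h4
        rw [hc, mul_zero, mul_zero]
  have hzero : ∀ i, i < n0 → coeff i g = 0 := by
    intro i hi
    rw [key i]
    apply Finset.sum_eq_zero
    intro k hk
    rcases eq_or_ne k q1 with rfl | hne
    · have h4 : i < k + p - 1 := by omega
      have hc : coeff i (ξ ^ (k + p - 1) * derivative ℂ ξ) = 0 := by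
        have hd : (X : PowerSeries ℂ) ^ (k + p - 1) ∣ ξ ^ (k + p - 1) * derivative ℂ ξ :=
          dvd_mul_of_dvd_left
            (pow_dvd_pow_of_dvd (PowerSeries.X_dvd_iff.2 hξ0) _) _
        exact PowerSeries.X_pow_dvd_iff.1 hd i h4
      rw [hc, mul_zero, mul_zero]
    · exact hterm i k (le_of_lt hi) hne
  have hcoef : coeff n0 g
      = c q1 * (((q1 : ℂ) - q0) * ((coeff 1 ξ) ^ n0 * (coeff 1 ξ * 1))) := by
    rw [key n0]
    rw [Finset.sum_eq_single q1]
    · have hq1 : q1 + p - 1 = n0 := by omega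
      rw [hq1, aux_coeff_mul_pow ξ hξ0, aux_coeff_pow_self ξ hξ0, coeff_derivative]
      norm_num
    · intro k _ hk
      exact hterm n0 k le_rfl hk
    · intro h
      exact absurd (Finset.mem_range.2 (by omega)) h
  constructor
  · intro hc1
    rw [PowerSeries.order_eq_nat]
    refine ⟨?_, hzero⟩
    rw [hcoef]
    have h1 : ((q1 : ℂ) - q0) ≠ 0 := by
      rw [sub_ne_zero]
      exact_mod_cast hq.ne'
    exact mul_ne_zero hc1 (mul_ne_zero h1
      (mul_ne_zero (pow_ne_zero _ hξ1) (by simpa using hξ1)))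
  · exact PowerSeries.nat_le_order g n0 hzero
end

section
/- Consider the ODE ẏ·x − (q_0/p)·y·ẋ = P(t) where x(t) is analytic of order p+r at t=0 and P is analytic of order ≥ q_1+p−1. If q_0(p+r)/p is not an integer, then any solution y analytic near t=0 is given by y = x^{q_0/p}·∫_0^t P(u)·x(u)^{−q_0/p−1}du (i.e., the integration constant must be 0), and consequently ord y ≥ q_1 − r. -/
open PowerSeries

lemma coeffA (z x : PowerSeries ℂ) (m s : ℕ) (hs : 1 ≤ s)
    (hz : ∀ k < m, coeff k z = 0) (hx : ∀ k < s, coeff k x = 0) :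
    coeff (m + s - 1) (pderiv' z * x) = (m : ℂ) * coeff m z * coeff s x := by
  rw [coeff_mul]
  rcases Nat.eq_zero_or_pos m with hm | hm
  · subst hm
    rw [Finset.sum_eq_zero]
    · simp
    · rintro ⟨i, j⟩ hij
      rw [Finset.HasAntidiagonal.mem_antidiagonal] at hij
      have : j < s := by omega
      simp [hx j this]
  · obtain ⟨k, rfl⟩ : ∃ k, m = k + 1 := ⟨m - 1, by omega⟩
    rw [Finset.sum_eq_single (k, s)]
    · simp only [pderiv', coeff_mk]
      push_cast; ring
    · rintro ⟨i, j⟩ hij hne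
      rw [Finset.HasAntidiagonal.mem_antidiagonal] at hij
      rcases lt_or_ge j s with hj | hj
      · simp [hx j hj]
      · have hi : i + 1 < k + 1 := by
          rcases Nat.lt_or_ge i k with h | h
          · omega
          · exfalso; apply hne; simp at hij ⊢; omega
        simp [pderiv', coeff_mk, hz _ hi]
    · intro h
      exfalso; apply h
      rw [Finset.HasAntidiagonal.mem_antidiagonal]; omega

lemma coeffB (z x : PowerSeries ℂ) (m s : ℕ) (hs : 1 ≤ s)
    (hz : ∀ k < m, coeff k z = 0) (hx : ∀ k < s, coeff k x = 0) :
    coeff (m + s - 1) (z * pderiv' x) = (s : ℂ) * coeff m z * coeff s x := by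
  rw [coeff_mul, Finset.sum_eq_single (m, s - 1)]
  · simp only [pderiv', coeff_mk]
    have : s - 1 + 1 = s := by omega
    rw [this]
    push_cast [Nat.cast_sub hs]; ring
  · rintro ⟨i, j⟩ hij hne
    rw [Finset.HasAntidiagonal.mem_antidiagonal] at hij
    rcases lt_or_ge i m with hi | hi
    · simp [hz i hi]
    · have hj : j + 1 < s := by
        rcases Nat.lt_or_ge m i with h | h
        · omega
        · exfalso; apply hne; simp at hij ⊢; omega
      simp [pderiv', coeff_mk, hx _ hj]
  · intro h
    exfalso; apply h
    rw [Finset.HasAntidiagonal.mem_antidiagonal]; omega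

lemma keyCoeff (z x : PowerSeries ℂ) (c : ℂ) (m s : ℕ) (hs : 1 ≤ s)
    (hz : ∀ k < m, coeff k z = 0) (hx : ∀ k < s, coeff k x = 0) :
    coeff (m + s - 1) (pderiv' z * x - C c * z * pderiv' x)
      = ((m : ℂ) - c * s) * coeff m z * coeff s x := by
  rw [map_sub, mul_assoc, coeff_C_mul, coeffA z x m s hs hz hx, coeffB z x m s hs hz hx]
  ring

/-- Consider the ODE ẏ·x − (q₀/p)·y·ẋ = P where x is analytic of
order p+r at t=0 and P is analytic of order ≥ q₁+p−1. If q₀(p+r)/p ∉ ℤ, then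
the analytic solution is uniquely determined (it is
x^{q₀/p}·∫₀ᵗ P·x^{−q₀/p−1}, the integration constant being forced to 0), and
consequently ord y ≥ q₁ − r. -/
theorem stmt8 (p q0 q1 r : ℕ) (hp : 0 < p) (hq0 : 0 < q0) (hr : 0 < r)
    (hq : q0 < q1)
    (hnotint : ¬ (p : ℤ) ∣ (q0 * (p + r) : ℤ))
    (x P y : PowerSeries ℂ)
    (hx : x.order = (p + r : ℕ))
    (hP : ((q1 + p - 1 : ℕ) : ℕ∞) ≤ P.order)
    (hode : pderiv' y * x - C ((q0 : ℂ) / p) * y * pderiv' x = P) :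
    (∀ y' : PowerSeries ℂ,
        pderiv' y' * x - C ((q0 : ℂ) / p) * y' * pderiv' x = P → y' = y) ∧
    ((q1 - r : ℕ) : ℕ∞) ≤ y.order := by
  set s := p + r with hs_def
  have hs : 1 ≤ s := by omega
  have hxo := PowerSeries.order_eq_nat.mp hx
  have hxs : coeff s x ≠ 0 := hxo.1
  have hxlo : ∀ k < s, coeff k x = 0 := hxo.2
  set c : ℂ := (q0 : ℂ) / p with hc_def
  -- The factor m - c*s is never zero for natural m
  have hfac : ∀ m : ℕ, (m : ℂ) - c * s ≠ 0 := by
    intro m h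
    apply hnotint
    have hp0 : (p : ℂ) ≠ 0 := Nat.cast_ne_zero.mpr hp.ne'
    have : (m : ℂ) * p = (q0 : ℂ) * s := by
      field_simp [hc_def] at h
      have hpp : (p:ℂ) * (p:ℂ)⁻¹ = 1 := mul_inv_cancel₀ hp0
      linear_combination (p:ℂ) * h + ((q0:ℂ) * s) * hpp
    have h2 : (m * p : ℕ) = (q0 * s : ℕ) := by
      exact_mod_cast this
    have h3 : q0 * (p + r) = p * m := by rw [← hs_def, ← h2, Nat.mul_comm]
    exact ⟨m, by exact_mod_cast h3⟩
  constructor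
  · intro y' hode'
    have hz : pderiv' (y' - y) * x - C c * (y' - y) * pderiv' x = 0 := by
      have hd : pderiv' (y' - y) = pderiv' y' - pderiv' y := by
        ext n
        simp [pderiv', coeff_mk, map_sub]
        ring
      rw [hd]
      have := sub_eq_zero.mpr (hode.trans hode'.symm)
      ring_nf at this ⊢
      linear_combination -this
    have hz0 : y' - y = 0 := by
      by_contra hne
      have hex : ∃ n, coeff n (y' - y) ≠ 0 := by
        by_contra hall
        push_neg at hall
        exact hne (PowerSeries.ext fun n => by simpa using hall n)
      set m := Nat.find hex with hm_def
      have hzm : coeff m (y' - y) ≠ 0 := Nat.find_spec hex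
      have hzlo : ∀ k < m, coeff k (y' - y) = 0 := fun k hk => by
        by_contra h; exact absurd hk (not_lt.mpr (Nat.find_le h))
      have := keyCoeff (y' - y) x c m s hs hzlo hxlo
      rw [hz, map_zero] at this
      rcases mul_eq_zero.mp this.symm with h | h
      · rcases mul_eq_zero.mp h with h | h
        · exact hfac m h
        · exact hzm h
      · exact hxs h
    exact sub_eq_zero.mp hz0
  · apply PowerSeries.nat_le_order
    intro k
    induction k using Nat.strong_induction_on with
    | _ k ih =>
      intro hk
      have hylo : ∀ j < k, coeff j y = 0 := fun j hj => ih j hj (by omega)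
      have hkey := keyCoeff y x c k s hs hylo hxlo
      rw [hode] at hkey
      have hPk : coeff (k + s - 1) P = 0 := by
        apply PowerSeries.coeff_of_lt_order
        apply lt_of_lt_of_le _ hP
        have : k + s - 1 < q1 + p - 1 := by omega
        exact_mod_cast Nat.cast_lt.mpr this
      rw [hPk] at hkey
      rcases mul_eq_zero.mp hkey.symm with h | h
      · rcases mul_eq_zero.mp h with h | h
        · exact absurd h (hfac k)
        · exact h
      · exact absurd h hxs
end

section
/- Define recursively P_{n+1} = x·ẋ·P_n' − ((q_n/p)·ẋ² + (2n−1)·ẍ·x)·P_n, with P_1 = ẏx − (q_0/p)yẋ. If y = Σ_k c_k x^{q_k/p} is the Puiseux expansion with ord x = p, then P_n = (∏_{k=0}^{n−1} (q_n − q_k)/p)·c_n·ẋ^{2n−1}·x^{q_n/p} + higher order terms; in particular ord_t P_n ≥ q_n + (2n−1)(p−1). -/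
open PowerSeries

namespace Stmt9

open PowerSeries Finset



lemma pd_eq (f : PowerSeries ℂ) : pderiv' f = derivativeFun f := by
  ext n
  show _ = coeff n (derivative ℂ f)
  simp only [pderiv', coeff_mk, coeff_derivative]
  ring

lemma pd_eq' (f : PowerSeries ℂ) : pderiv' f = derivative ℂ f := pd_eq f

lemma pd_zero : pderiv' (0 : PowerSeries ℂ) = 0 := by
  simp [pd_eq']

lemma pd_add (f g : PowerSeries ℂ) : pderiv' (f + g) = pderiv' f + pderiv' g := by
  simp [pd_eq']

lemma pd_sub (f g : PowerSeries ℂ) : pderiv' (f - g) = pderiv' f - pderiv' g := by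
  simp [pd_eq']

lemma pd_mul (f g : PowerSeries ℂ) : pderiv' (f * g) = pderiv' f * g + f * pderiv' g := by
  simp only [pd_eq', Derivation.leibniz, smul_eq_mul]
  ring

lemma pd_C (a : ℂ) : pderiv' (C a) = 0 := by
  simp [pd_eq']

lemma pd_C_mul (a : ℂ) (f : PowerSeries ℂ) :
    pderiv' (C a * f) = C a * pderiv' f := by
  rw [pd_mul, pd_C]; ring

lemma pd_pow (f : PowerSeries ℂ) (n : ℕ) :
    pderiv' (f ^ n) = C (n : ℂ) * f ^ (n - 1) * pderiv' f := by
  rw [pd_eq', Derivation.leibniz_pow, pd_eq']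
  rw [smul_eq_mul, nsmul_eq_mul]
  rw [map_natCast C n]
  ring

lemma pd_sum {ι : Type*} (s : Finset ι) (f : ι → PowerSeries ℂ) :
    pderiv' (∑ i ∈ s, f i) = ∑ i ∈ s, pderiv' (f i) := by
  simp [pd_eq']



/-- `po N f` means the order of `f` is at least `N`. -/
def po (N : ℕ) (f : PowerSeries ℂ) : Prop := ∀ i < N, coeff i f = 0

lemma po_mono {N M : ℕ} {f : PowerSeries ℂ} (h : po N f) (hle : M ≤ N) : po M f :=
  fun i hi => h i (lt_of_lt_of_le hi hle)

lemma po_zero (N : ℕ) : po N (0 : PowerSeries ℂ) := by intro i _; simp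

lemma po_add {N : ℕ} {f g : PowerSeries ℂ} (hf : po N f) (hg : po N g) : po N (f + g) := by
  intro i hi; simp [hf i hi, hg i hi]

lemma po_sub {N : ℕ} {f g : PowerSeries ℂ} (hf : po N f) (hg : po N g) : po N (f - g) := by
  intro i hi; simp [hf i hi, hg i hi]

lemma po_mul {N M : ℕ} {f g : PowerSeries ℂ} (hf : po N f) (hg : po M g) :
    po (N + M) (f * g) := by
  intro i hi
  rw [coeff_mul]
  apply Finset.sum_eq_zero
  rintro ⟨a, b⟩ hab
  rw [Finset.HasAntidiagonal.mem_antidiagonal] at hab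
  by_cases ha : a < N
  · simp [hf a ha]
  · have hb : b < M := by omega
    simp [hg b hb]

lemma po_pow {N : ℕ} {f : PowerSeries ℂ} (hf : po N f) (k : ℕ) : po (k * N) (f ^ k) := by
  induction k with
  | zero => intro i hi; omega
  | succ k ih =>
    have := po_mul ih hf
    rw [pow_succ]
    exact po_mono this (by ring_nf; omega)

lemma po_C_mul {N : ℕ} {f : PowerSeries ℂ} (a : ℂ) (hf : po N f) : po N (C a * f) := by
  have : po (0 + N) (C a * f) := po_mul (fun i hi => by omega) hf
  simpa using this

lemma po_pd {N : ℕ} {f : PowerSeries ℂ} (hf : po N f) : po (N - 1) (pderiv' f) := by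
  intro i hi
  simp only [pderiv', coeff_mk]
  rw [hf (i + 1) (by omega), mul_zero]

lemma po_order {N : ℕ} {f : PowerSeries ℂ} (hf : po N f) : (N : ℕ∞) ≤ f.order :=
  nat_le_order f N hf

lemma po_sum {ι : Type*} {N : ℕ} (s : Finset ι) (f : ι → PowerSeries ℂ)
    (h : ∀ i ∈ s, po N (f i)) : po N (∑ i ∈ s, f i) := by
  intro i hi
  rw [map_sum]
  exact Finset.sum_eq_zero fun j hj => h j hj i hi

section Key

variable {p : ℕ} {ξ x : PowerSeries ℂ} (hp : 0 < p) (hξp : ξ ^ p = x)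
include hp hξp

lemma keyA (Q : ℕ) :
    x * C (Q : ℂ) * ξ ^ (Q - 1) * pderiv' ξ
      = C ((Q : ℂ) / p) * pderiv' x * ξ ^ Q := by
  rcases Nat.eq_zero_or_pos Q with hQ | hQ
  · subst hQ; simp
  · have hDx : pderiv' x = C (p : ℂ) * ξ ^ (p - 1) * pderiv' ξ := by
      rw [← hξp, pd_pow]
    have hC : C (Q : ℂ) = C ((Q : ℂ) / p) * C (p : ℂ) := by
      rw [← map_mul]
      congr 1
      rw [div_mul_cancel₀ _ (Nat.cast_ne_zero.mpr hp.ne' : (p : ℂ) ≠ 0)]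
    have h1 : ξ ^ p * ξ ^ (Q - 1) = ξ ^ (p - 1) * ξ ^ Q := by
      rw [← pow_add, ← pow_add]
      congr 1
      omega
    rw [hDx, ← hξp, hC]
    linear_combination (C ((Q : ℂ) / p) * C (p : ℂ) * pderiv' ξ) * h1

lemma opKey (j Q : ℕ) (hj : 1 ≤ j) (b : ℂ) :
    x * pderiv' x * pderiv' ((pderiv' x) ^ j * ξ ^ Q)
      - (C b * (pderiv' x) ^ 2 + C (j : ℂ) * pderiv' (pderiv' x) * x)
          * ((pderiv' x) ^ j * ξ ^ Q)
    = C ((Q : ℂ) / p - b) * ((pderiv' x) ^ (j + 2) * ξ ^ Q) := by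
  have hA := keyA hp hξp Q
  have hX : pderiv' x * (pderiv' x) ^ (j - 1) = (pderiv' x) ^ j := by
    rw [← pow_succ']
    congr 1
    omega
  rw [pd_mul, pd_pow, pd_pow, map_sub]
  linear_combination (pderiv' x * (pderiv' x) ^ j) * hA
    + (C (j : ℂ) * pderiv' (pderiv' x) * x * ξ ^ Q) * hX

lemma baseKey (Q q0 : ℕ) :
    pderiv' (ξ ^ Q) * x - C ((q0 : ℂ) / p) * (ξ ^ Q) * pderiv' x
    = C (((Q : ℂ) - (q0 : ℂ)) / p) * (pderiv' x * ξ ^ Q) := by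
  have hA := keyA hp hξp Q
  have hC : ((Q : ℂ) - (q0 : ℂ)) / p = (Q : ℂ) / p - (q0 : ℂ) / p := by ring
  rw [pd_pow, hC, map_sub]
  linear_combination hA

end Key



/-- The partial sum `∑_{m=n}^{M} A(n,m) c_m ẋ^{2n-1} ξ^{q_m}`. -/
noncomputable def Ssum (p : ℕ) (q : ℕ → ℕ) (ξ x : PowerSeries ℂ) (c : ℕ → ℂ)
    (n M : ℕ) : PowerSeries ℂ :=
  ∑ m ∈ Finset.Icc n M,
    C ((∏ k ∈ Finset.range n, ((q m : ℂ) - (q k : ℂ)) / p) * c m)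
      * ((pderiv' x) ^ (2 * n - 1) * ξ ^ (q m))

end Stmt9

/-- Define P₁ = ẏx − (q₀/p)yẋ and recursively
P_{n+1} = x·ẋ·P_n' − ((q_n/p)·ẋ² + (2n−1)·ẍ·x)·P_n. If y = Σ_k c_k x^{q_k/p}
is the Puiseux expansion (x = ξᵖ, ord ξ = 1), then
P_n = (∏_{k<n} (q_n−q_k)/p)·c_n·ẋ^{2n−1}·x^{q_n/p} + higher order terms;
in particular ord_t P_n ≥ q_n + (2n−1)(p−1). -/
theorem stmt9 (p : ℕ) (hp : 1 < p) (q : ℕ → ℕ) (hq : StrictMono q)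
    (x y ξ : PowerSeries ℂ) (c : ℕ → ℂ)
    (hξ0 : constantCoeff ξ = 0) (hξ1 : coeff 1 ξ ≠ 0)
    (hξp : ξ ^ p = x)
    (hpuis : ∀ n, coeff n y =
      ∑ k ∈ Finset.range (n + 1), c k * coeff n (ξ ^ (q k)))
    (P : ℕ → PowerSeries ℂ)
    (hP1 : P 1 = pderiv' y * x - C ((q 0 : ℂ) / p) * y * pderiv' x)
    (hPrec : ∀ n, 1 ≤ n → P (n + 1) =
      x * pderiv' x * pderiv' (P n)
        - (C ((q n : ℂ) / p) * (pderiv' x) ^ 2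
            + C (2 * (n : ℂ) - 1) * pderiv' (pderiv' x) * x) * P n) :
    ∀ n, 1 ≤ n → ∃ R : PowerSeries ℂ,
      P n = C (∏ k ∈ Finset.range n, ((q n : ℂ) - (q k : ℂ)) / p)
              * C (c n) * (pderiv' x) ^ (2 * n - 1) * ξ ^ (q n) + R ∧
      ((q n + (2 * n - 1) * (p - 1) : ℕ) : ℕ∞) < R.order ∧
      ((q n + (2 * n - 1) * (p - 1) : ℕ) : ℕ∞) ≤ (P n).order := by
  classical
  have hp1 : 0 < p := by omega
  have hξ : Stmt9.po 1 ξ := by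
    intro i hi
    interval_cases i
    simpa [PowerSeries.coeff_zero_eq_constantCoeff] using hξ0
  have hxpo : Stmt9.po p x := by
    have h := Stmt9.po_pow hξ p
    rw [mul_one, hξp] at h
    exact h
  have hX' : Stmt9.po (p - 1) (pderiv' x) := Stmt9.po_pd hxpo
  have hX'' : Stmt9.po (p - 2) (pderiv' (pderiv' x)) := by
    have h := Stmt9.po_pd hX'
    exact Stmt9.po_mono h (by omega)
  have hξQ : ∀ Q : ℕ, Stmt9.po Q (ξ ^ Q) := by
    intro Q
    have h := Stmt9.po_pow hξ Q
    rwa [mul_one] at h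
  -- main strengthened claim
  have main : ∀ n, 1 ≤ n → ∀ M, n ≤ M → ∃ R : PowerSeries ℂ,
      P n = Stmt9.Ssum p q ξ x c n M + R ∧
      Stmt9.po (q M + (2 * n - 1) * (p - 1) + 1) R := by
    intro n hn
    induction n, hn using Nat.le_induction with
    | base =>
      intro M hM
      set T : PowerSeries ℂ := ∑ m ∈ Finset.range (M + 1), C (c m) * ξ ^ (q m) with hT
      have hR0 : Stmt9.po (q M + 1) (y - T) := by
        intro i hi
        have hiqM : i ≤ q M := by omega
        have hcoT : coeff i T = ∑ m ∈ Finset.range (M + 1), c m * coeff i (ξ ^ q m) := by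
          rw [hT, map_sum]
          exact Finset.sum_congr rfl fun m _ => by rw [PowerSeries.coeff_C_mul]
        rw [map_sub, hpuis i, hcoT]
        have e1 : ∑ k ∈ Finset.range (i + 1), c k * coeff i (ξ ^ q k)
            = ∑ k ∈ Finset.range (min i M + 1), c k * coeff i (ξ ^ q k) := by
          symm
          apply Finset.sum_subset
          · intro k hk
            simp only [Finset.mem_range] at hk ⊢
            omega
          · intro k hk hk2
            simp only [Finset.mem_range] at hk hk2
            have hkM : M < k := by omega
            have : i < q k := lt_of_le_of_lt hiqM (hq hkM)
            rw [hξQ (q k) i this, mul_zero]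
        have e2 : ∑ m ∈ Finset.range (M + 1), c m * coeff i (ξ ^ q m)
            = ∑ k ∈ Finset.range (min i M + 1), c k * coeff i (ξ ^ q k) := by
          symm
          apply Finset.sum_subset
          · intro k hk
            simp only [Finset.mem_range] at hk ⊢
            omega
          · intro k hk hk2
            simp only [Finset.mem_range] at hk hk2
            have hik : i < k := by omega
            have : i < q k := lt_of_lt_of_le hik (hq.le_apply)
            rw [hξQ (q k) i this, mul_zero]
        rw [e1, e2, sub_self]
      have hpd : pderiv' y = pderiv' T + pderiv' (y - T) := by
        have h := Stmt9.pd_add T (y - T)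
        rw [add_sub_cancel] at h
        exact h
      have hTop : pderiv' T * x - C ((q 0 : ℂ) / p) * T * pderiv' x
          = Stmt9.Ssum p q ξ x c 1 M := by
        rw [hT, Stmt9.pd_sum, Finset.sum_mul]
        rw [Finset.mul_sum, Finset.sum_mul, ← Finset.sum_sub_distrib]
        have e3 : ∀ m ∈ Finset.range (M + 1),
            pderiv' (C (c m) * ξ ^ q m) * x
              - C ((q 0 : ℂ) / p) * (C (c m) * ξ ^ q m) * pderiv' x
            = C ((((q m : ℂ) - (q 0 : ℂ)) / p) * c m)
                * (pderiv' x ^ (2 * 1 - 1) * ξ ^ q m) := by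
          intro m _
          have hb := Stmt9.baseKey hp1 hξp (q m) (q 0)
          rw [Stmt9.pd_C_mul, map_mul, pow_one]
          linear_combination (C (c m)) * hb
        rw [Finset.sum_congr rfl e3]
        have e4 : Finset.range (M + 1) = insert 0 (Finset.Icc 1 M) := by
          ext k
          simp only [Finset.mem_range, Finset.mem_insert, Finset.mem_Icc]
          omega
        rw [e4, Finset.sum_insert (by simp)]
        have e5 : C ((((q 0 : ℂ) - (q 0 : ℂ)) / p) * c 0)
            * (pderiv' x ^ (2 * 1 - 1) * ξ ^ q 0) = 0 := by
          simp
        rw [e5, zero_add, Stmt9.Ssum]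
        apply Finset.sum_congr rfl
        intro m _
        rw [Finset.prod_range_one]
      refine ⟨pderiv' (y - T) * x - C ((q 0 : ℂ) / p) * (y - T) * pderiv' x, ?_, ?_⟩
      · linear_combination hP1 + x * hpd + hTop
      · have key : Stmt9.po (q M + p)
            (pderiv' (y - T) * x - C ((q 0 : ℂ) / p) * (y - T) * pderiv' x) := by
          apply Stmt9.po_sub
          · have h1 := Stmt9.po_mul (Stmt9.po_pd hR0) hxpo
            exact Stmt9.po_mono h1 (by omega)
          · have h2 := Stmt9.po_mul (Stmt9.po_C_mul ((q 0 : ℂ) / p) hR0) hX'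
            exact Stmt9.po_mono h2 (by omega)
        exact Stmt9.po_mono key (by omega)
    | succ n hn ih =>
      intro M hM
      obtain ⟨R, hPn, hR⟩ := ih M (by omega)
      have hj1 : 1 ≤ 2 * n - 1 := by omega
      have hjc : C (2 * (n : ℂ) - 1) = C (((2 * n - 1 : ℕ) : ℂ)) := by
        congr 1
        rw [Nat.cast_sub (by omega : 1 ≤ 2 * n)]
        push_cast
        ring
      have hrec := hPrec n hn
      rw [hjc] at hrec
      set E : PowerSeries ℂ := C ((q n : ℂ) / p) * (pderiv' x) ^ 2
          + C (((2 * n - 1 : ℕ) : ℂ)) * pderiv' (pderiv' x) * x with hE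
      have hterm : ∀ (b : ℂ) (Q : ℕ),
          x * pderiv' x * pderiv' (C b * ((pderiv' x) ^ (2 * n - 1) * ξ ^ Q))
            - E * (C b * ((pderiv' x) ^ (2 * n - 1) * ξ ^ Q))
          = C (b * ((Q : ℂ) / p - (q n : ℂ) / p))
              * ((pderiv' x) ^ ((2 * n - 1) + 2) * ξ ^ Q) := by
        intro b Q
        have hop := Stmt9.opKey hp1 hξp (2 * n - 1) Q hj1 ((q n : ℂ) / p)
        rw [Stmt9.pd_C_mul, map_mul, hE]
        linear_combination (C b) * hop
      have hsum : x * pderiv' x * pderiv' (Stmt9.Ssum p q ξ x c n M)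
          - E * Stmt9.Ssum p q ξ x c n M = Stmt9.Ssum p q ξ x c (n + 1) M := by
        rw [Stmt9.Ssum, Stmt9.pd_sum, Finset.mul_sum, Finset.mul_sum,
          ← Finset.sum_sub_distrib]
        have e3 : ∀ m ∈ Finset.Icc n M,
            x * pderiv' x * pderiv' (C ((∏ k ∈ Finset.range n, ((q m : ℂ) - (q k : ℂ)) / p) * c m)
                * ((pderiv' x) ^ (2 * n - 1) * ξ ^ (q m)))
              - E * (C ((∏ k ∈ Finset.range n, ((q m : ℂ) - (q k : ℂ)) / p) * c m)
                * ((pderiv' x) ^ (2 * n - 1) * ξ ^ (q m)))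
            = C ((∏ k ∈ Finset.range (n + 1), ((q m : ℂ) - (q k : ℂ)) / p) * c m)
                * ((pderiv' x) ^ (2 * (n + 1) - 1) * ξ ^ (q m)) := by
          intro m _
          rw [hterm]
          have hpow : (2 * n - 1) + 2 = 2 * (n + 1) - 1 := by omega
          rw [hpow, Finset.prod_range_succ]
          congr 2
          ring
        rw [Finset.sum_congr rfl e3]
        have e4 : Finset.Icc n M = insert n (Finset.Icc (n + 1) M) := by
          ext k
          simp only [Finset.mem_insert, Finset.mem_Icc]
          omega
        rw [e4, Finset.sum_insert (by simp), Stmt9.Ssum]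
        have e5 : C ((∏ k ∈ Finset.range (n + 1), ((q n : ℂ) - (q k : ℂ)) / p) * c n)
            * ((pderiv' x) ^ (2 * (n + 1) - 1) * ξ ^ (q n)) = 0 := by
          rw [Finset.prod_range_succ]
          simp
        rw [e5, zero_add]
      refine ⟨x * pderiv' x * pderiv' R - E * R, ?_, ?_⟩
      · have hpd2 : pderiv' (P n) = pderiv' (Stmt9.Ssum p q ξ x c n M) + pderiv' R := by
          rw [hPn, Stmt9.pd_add]
        linear_combination hrec + (x * pderiv' x) * hpd2 + hsum - E * hPn
      · obtain ⟨K, hK⟩ : ∃ K, (2 * n - 1) * (p - 1) = K := ⟨_, rfl⟩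
        have hfact : (2 * (n + 1) - 1) * (p - 1) = K + 2 * (p - 1) := by
          rw [← hK, show 2 * (n + 1) - 1 = (2 * n - 1) + 2 by omega, add_mul]
        rw [hfact]
        rw [hK] at hR
        apply Stmt9.po_sub
        · have h1 := Stmt9.po_mul (Stmt9.po_mul hxpo hX') (Stmt9.po_pd hR)
          exact Stmt9.po_mono h1 (by omega)
        · have hEpo : Stmt9.po (2 * p - 2) E := by
            rw [hE]
            apply Stmt9.po_add
            · have h := Stmt9.po_C_mul ((q n : ℂ) / p) (Stmt9.po_pow hX' 2)
              exact Stmt9.po_mono h (by omega)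
            · have h := Stmt9.po_mul (Stmt9.po_C_mul (((2 * n - 1 : ℕ) : ℂ)) hX'') hxpo
              exact Stmt9.po_mono h (by omega)
          have h2 := Stmt9.po_mul hEpo hR
          exact Stmt9.po_mono h2 (by omega)
  -- conclusion
  intro n hn
  obtain ⟨R, hPn, hR⟩ := main n hn n le_rfl
  refine ⟨R, ?_, ?_, ?_⟩
  · rw [hPn, Stmt9.Ssum, Finset.Icc_self, Finset.sum_singleton, map_mul]
    ring
  · have h := Stmt9.po_order hR
    calc ((q n + (2 * n - 1) * (p - 1) : ℕ) : ℕ∞)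
        < ((q n + (2 * n - 1) * (p - 1) + 1 : ℕ) : ℕ∞) := by
          exact_mod_cast Nat.lt_succ_self _
      _ ≤ R.order := h
  · have hTpo : Stmt9.po (q n + (2 * n - 1) * (p - 1)) (Stmt9.Ssum p q ξ x c n n) := by
      rw [Stmt9.Ssum]
      apply Stmt9.po_sum
      intro m hm
      rw [Finset.mem_Icc] at hm
      have hmn : m = n := by omega
      subst hmn
      have h := Stmt9.po_C_mul
        ((∏ k ∈ Finset.range m, ((q m : ℂ) - (q k : ℂ)) / p) * c m)
        (Stmt9.po_mul (Stmt9.po_pow hX' (2 * m - 1)) (hξQ (q m)))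
      exact Stmt9.po_mono h (by omega)
    have hPpo : Stmt9.po (q n + (2 * n - 1) * (p - 1)) (P n) := by
      rw [hPn]
      exact Stmt9.po_add hTpo (Stmt9.po_mono hR (by omega))
    exact Stmt9.po_order hPpo
end

section
/- (Generating function for first derivatives) With u=x^{1/p}, w=y^{1/q}, z=(1+g_1w+g_2w²+...)^{1/p} (so u=wz), the generating series G_i = Σ_{l≥1}(∂g_l/∂c_i)w^l satisfies G_i = −(p/q)·w^i·z^{p+q+i−1}·(z + w·∂z/∂w). In particular ∂w/∂c_i = (1/q)·w^{i+1}·z^{q+i}. -/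
open PowerSeries

/-- Coefficients are polynomials in the Puiseux coefficients c₁,c₂,…
(variable i of `MvPolynomial ℕ ℂ` stands for c_i). -/
noncomputable abbrev A' : Type := MvPolynomial ℕ ℂ

/-- Formal derivative ∂/∂w of a power series in w. -/
noncomputable def dW (f : PowerSeries A') : PowerSeries A' :=
  PowerSeries.mk fun n => ((n : A') + 1) * coeff (R := A') (n + 1) f

namespace Stmt18Aux

/-- Coefficientwise partial derivative ∂/∂c_i of a power series. -/
noncomputable def Dser (i : ℕ) (f : PowerSeries A') : PowerSeries A' :=
  PowerSeries.mk fun n => MvPolynomial.pderiv i (coeff (R := A') n f)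

@[simp] lemma coeff_Dser (i n : ℕ) (f : PowerSeries A') :
    coeff (R := A') n (Dser i f) = MvPolynomial.pderiv i (coeff (R := A') n f) := coeff_mk _ _

lemma Dser_add (i : ℕ) (f g : PowerSeries A') :
    Dser i (f + g) = Dser i f + Dser i g := by
  ext n; simp

lemma Dser_one (i : ℕ) : Dser i (1 : PowerSeries A') = 0 := by
  refine PowerSeries.ext fun n => ?_
  simp only [coeff_Dser, coeff_one, map_zero]
  split <;> simp

lemma Dser_mul (i : ℕ) (f g : PowerSeries A') :
    Dser i (f * g) = Dser i f * g + f * Dser i g := by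
  refine PowerSeries.ext fun n => ?_
  simp only [coeff_Dser, map_add, coeff_mul, map_sum, MvPolynomial.pderiv_mul,
    ← Finset.sum_add_distrib]

lemma dW_eq (f : PowerSeries A') : dW f = derivativeFun f := by
  refine PowerSeries.ext fun n => ?_
  rw [show derivativeFun f = derivative A' f from rfl]
  simp [dW, coeff_derivative]; ring

lemma dW_mul (f g : PowerSeries A') :
    dW (f * g) = dW f * g + f * dW g := by
  simp only [dW_eq, derivativeFun_mul]
  simp only [smul_eq_mul]; ring

lemma dW_one : dW (1 : PowerSeries A') = 0 := by
  rw [dW_eq, derivativeFun_one]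

lemma coeff_X_dW (n : ℕ) (f : PowerSeries A') :
    coeff (R := A') n (PowerSeries.X * dW f) = (n : A') * coeff (R := A') n f := by
  cases n with
  | zero => simp
  | succ m =>
      rw [coeff_succ_X_mul]
      simp only [dW, coeff_mk]; push_cast; ring

lemma XdW_add (f g : PowerSeries A') :
    PowerSeries.X * dW (f + g) = PowerSeries.X * dW f + PowerSeries.X * dW g := by
  refine PowerSeries.ext fun n => ?_
  simp [coeff_X_dW, mul_add]

lemma XdW_mul (f g : PowerSeries A') :
    PowerSeries.X * dW (f * g)
      = (PowerSeries.X * dW f) * g + f * (PowerSeries.X * dW g) := by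
  rw [dW_mul]; ring

/-- Leibniz rule implies the power rule. -/
lemma leibniz_pow (D : PowerSeries A' → PowerSeries A')
    (hD : ∀ f g, D (f * g) = D f * g + f * D g)
    (f : PowerSeries A') (m : ℕ) (hm : 1 ≤ m) :
    D (f ^ m) = PowerSeries.C (R := A') ((m : ℕ) : A') * (f ^ (m - 1) * D f) := by
  induction m with
  | zero => omega
  | succ k ih =>
      rcases Nat.eq_or_lt_of_le hm with h | h
      · simp [← h]
      · have hk : 1 ≤ k := by omega
        have hfk : f ^ (k - 1) * f = f ^ k := by
          rw [← pow_succ]; congr 1; omega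
        rw [pow_succ, hD, ih hk]
        have : ((k + 1 : ℕ) : A') = ((k : ℕ) : A') + 1 := by push_cast; ring
        rw [this, map_add, map_one]
        simp only [Nat.add_sub_cancel]
        rw [← hfk]; ring

lemma Dser_pow (i : ℕ) (f : PowerSeries A') (m : ℕ) (hm : 1 ≤ m) :
    Dser i (f ^ m) = PowerSeries.C (R := A') ((m : ℕ) : A') * (f ^ (m - 1) * Dser i f) :=
  leibniz_pow (Dser i) (Dser_mul i) f m hm

lemma XdW_pow (f : PowerSeries A') (m : ℕ) (hm : 1 ≤ m) :
    PowerSeries.X * dW (f ^ m)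
      = PowerSeries.C (R := A') ((m : ℕ) : A') * (f ^ (m - 1) * (PowerSeries.X * dW f)) :=
  leibniz_pow (fun f => PowerSeries.X * dW f) XdW_mul f m hm

/-- The series `∑_{k≥1} a_k X^k f_k` (coefficientwise finite diagonal sum). -/
noncomputable def T (a : ℕ → A') (f : ℕ → PowerSeries A') : PowerSeries A' :=
  PowerSeries.mk fun n => ∑ k ∈ Finset.Icc 1 n, a k * coeff (R := A') (n - k) (f k)

@[simp] lemma coeff_T (a : ℕ → A') (f : ℕ → PowerSeries A') (n : ℕ) :
    coeff (R := A') n (T a f) = ∑ k ∈ Finset.Icc 1 n, a k * coeff (R := A') (n - k) (f k) :=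
  coeff_mk _ _

lemma coeff_X_pow_mul_ite (n k : ℕ) (f : PowerSeries A') :
    coeff (R := A') n (PowerSeries.X ^ k * f)
      = if k ≤ n then coeff (R := A') (n - k) f else 0 := by
  split
  · next h =>
      obtain ⟨d, rfl⟩ : ∃ d, n = d + k := ⟨n - k, by omega⟩
      rw [coeff_X_pow_mul, Nat.add_sub_cancel]
  · next h =>
      rw [coeff_mul]
      apply Finset.sum_eq_zero
      rintro ⟨x, y⟩ hxy
      rw [Finset.HasAntidiagonal.mem_antidiagonal] at hxy
      rw [coeff_X_pow, if_neg (by omega), zero_mul]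

lemma coeff_C_mul_X_pow_mul (n k : ℕ) (r : A') (f : PowerSeries A') :
    coeff (R := A') n (PowerSeries.C (R := A') r * PowerSeries.X ^ k * f)
      = if k ≤ n then r * coeff (R := A') (n - k) f else 0 := by
  rw [mul_assoc, coeff_C_mul, coeff_X_pow_mul_ite]
  split <;> simp

lemma coeff_T_trunc (a : ℕ → A') (f : ℕ → PowerSeries A') (n N : ℕ) (hn : n ≤ N) :
    coeff (R := A') n (T a f)
      = coeff (R := A') n (∑ k ∈ Finset.Icc 1 N, PowerSeries.C (R := A') (a k) * PowerSeries.X ^ k * f k) := by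
  rw [coeff_T, map_sum]
  rw [show (Finset.Icc 1 n) = (Finset.Icc 1 N).filter (fun k => k ≤ n) by
    ext k; simp [Finset.mem_filter, Finset.mem_Icc]; omega]
  rw [Finset.sum_filter]
  apply Finset.sum_congr rfl
  intro k hk
  rw [coeff_C_mul_X_pow_mul]

lemma coeff_mul_right_congr {f₁ f₂ : PowerSeries A'} (h : PowerSeries A') (n : ℕ)
    (hc : ∀ m ≤ n, coeff (R := A') m f₁ = coeff (R := A') m f₂) :
    coeff (R := A') n (f₁ * h) = coeff (R := A') n (f₂ * h) := by
  rw [coeff_mul, coeff_mul]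
  apply Finset.sum_congr rfl
  rintro ⟨x, y⟩ hxy
  rw [Finset.HasAntidiagonal.mem_antidiagonal] at hxy
  rw [hc x (by omega)]

lemma T_mul (a : ℕ → A') (f : ℕ → PowerSeries A') (h : PowerSeries A') :
    T a f * h = T a (fun k => f k * h) := by
  refine PowerSeries.ext fun n => ?_
  rw [coeff_mul_right_congr h n (fun m hm => coeff_T_trunc a f m n hm)]
  rw [Finset.sum_mul, map_sum, coeff_T]
  apply Finset.sum_congr rfl
  intro k hk
  rw [mul_assoc, coeff_C_mul_X_pow_mul]
  rw [if_pos (Finset.mem_Icc.mp hk).2]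

lemma T_congr {a b : ℕ → A'} {f g : ℕ → PowerSeries A'}
    (ha : ∀ k, 1 ≤ k → a k = b k) (hf : ∀ k, 1 ≤ k → f k = g k) :
    T a f = T b g := by
  refine PowerSeries.ext fun n => ?_
  rw [coeff_T, coeff_T]
  apply Finset.sum_congr rfl
  intro k hk
  rw [ha k (Finset.mem_Icc.mp hk).1, hf k (Finset.mem_Icc.mp hk).1]

lemma T_sub (a b : ℕ → A') (f : ℕ → PowerSeries A') :
    T a f - T b f = T (fun k => a k - b k) f := by
  refine PowerSeries.ext fun n => ?_
  simp [Finset.sum_sub_distrib, sub_mul]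

lemma C_mul_T (r : A') (a : ℕ → A') (f : ℕ → PowerSeries A') :
    PowerSeries.C (R := A') r * T a f = T (fun k => r * a k) f := by
  refine PowerSeries.ext fun n => ?_
  rw [coeff_C_mul, coeff_T, coeff_T, Finset.mul_sum]
  exact Finset.sum_congr rfl fun k _ => by ring

lemma T_C_inner (a r : ℕ → A') (f : ℕ → PowerSeries A') :
    T a (fun k => PowerSeries.C (R := A') (r k) * f k) = T (fun k => a k * r k) f := by
  refine PowerSeries.ext fun n => ?_
  rw [coeff_T, coeff_T]
  exact Finset.sum_congr rfl fun k _ => by rw [coeff_C_mul]; ring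

lemma Dser_T (i : ℕ) (a : ℕ → A') (f : ℕ → PowerSeries A') :
    Dser i (T a f)
      = T (fun k => MvPolynomial.pderiv i (a k)) f + T a (fun k => Dser i (f k)) := by
  refine PowerSeries.ext fun n => ?_
  simp only [coeff_Dser, map_add, coeff_T, map_sum, MvPolynomial.pderiv_mul,
    ← Finset.sum_add_distrib]

lemma T_single (i : ℕ) (hi : 1 ≤ i) (f : ℕ → PowerSeries A') :
    T (fun k => MvPolynomial.pderiv i (MvPolynomial.X k)) f
      = PowerSeries.X ^ i * f i := by
  refine PowerSeries.ext fun n => ?_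
  rw [coeff_T, coeff_X_pow_mul_ite]
  classical
  have hs : ∀ k ∈ Finset.Icc 1 n,
      (MvPolynomial.pderiv i (MvPolynomial.X k) : A') * coeff (R := A') (n - k) (f k)
        = if k = i then coeff (R := A') (n - k) (f k) else 0 := by
    intro k _
    rw [MvPolynomial.pderiv_X, Pi.single_apply]
    split <;> simp
  rw [Finset.sum_congr rfl hs, Finset.sum_ite_eq' (Finset.Icc 1 n) i]
  simp [Finset.mem_Icc, hi]

lemma XdW_T (a : ℕ → A') (f : ℕ → PowerSeries A') :
    PowerSeries.X * dW (T a f)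
      = T (fun k => (k : A') * a k) f + T a (fun k => PowerSeries.X * dW (f k)) := by
  refine PowerSeries.ext fun n => ?_
  rw [coeff_X_dW, map_add, coeff_T, coeff_T, coeff_T, Finset.mul_sum,
    ← Finset.sum_add_distrib]
  refine Finset.sum_congr rfl fun k hk => ?_
  rw [coeff_X_dW]
  have hkn : ((n - k : ℕ) : A') = (n : A') - (k : A') :=
    Nat.cast_sub (Finset.mem_Icc.mp hk).2
  rw [hkn]; ring

end Stmt18Aux

open Stmt18Aux

set_option maxHeartbeats 1000000 in

/-- Generating function for first derivatives: with u=x^{1/p},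
w=y^{1/q}, z=(1+g₁w+g₂w²+…)^{1/p} (so u=wz and 1 = z^q + Σ_k c_k w^k z^{q+k}),
the generating series G_i = Σ_l (∂g_l/∂c_i) w^l satisfies
G_i = −(p/q)·w^i·z^{p+q+i−1}·(z + w·∂z/∂w). In particular (in the variable u,
where w^q = u^q + Σ c_k u^{q+k} and u = w·z) one has
∂w/∂c_i = (1/q)·w^{i+1}·z^{q+i}. -/
theorem stmt18 (p q : ℕ) (hp : 1 < p) (hq : 1 < q) (i : ℕ) (hi : 1 ≤ i)
    (g : ℕ → A') (hg0 : g 0 = 1)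
    (z : PowerSeries A') (hz0 : constantCoeff (R := A') z = 1)
    (hzp : ∀ n, coeff (R := A') n (z ^ p) = if n = 0 then 1 else g n)
    (hinv : ∀ n, coeff (R := A') n (z ^ q)
        + ∑ k ∈ Finset.Icc 1 n, (MvPolynomial.X k : A') * coeff (R := A') (n - k) (z ^ (q + k))
      = if n = 0 then 1 else 0)
    (W Z : PowerSeries A')
    (hW0 : constantCoeff (R := A') W = 0) (hW1 : coeff (R := A') 1 W = 1)
    (hWq : ∀ n, coeff (R := A') n (W ^ q)
      = if n < q then 0 else if n = q then 1 else MvPolynomial.X (n - q))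
    (hWZ : PowerSeries.X = W * Z) :
    (PowerSeries.mk fun l => MvPolynomial.pderiv i (g l))
      = - PowerSeries.C (R := A') (MvPolynomial.C ((p : ℂ) / q))
          * PowerSeries.X ^ i * z ^ (p + q + i - 1)
          * (z + PowerSeries.X * dW z) ∧
    (PowerSeries.mk fun n => MvPolynomial.pderiv i (coeff (R := A') n W))
      = PowerSeries.C (R := A') (MvPolynomial.C (1 / (q : ℂ)))
          * W ^ (i + 1) * Z ^ (q + i) := by
  have hq1 : 1 ≤ q := le_of_lt hq
  have hp1 : 1 ≤ p := le_of_lt hp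
  have hq0 : (q : ℂ) ≠ 0 := Nat.cast_ne_zero.mpr (by omega)
  constructor
  · -- Part 1
    -- hinv as a power series identity
    have hS : z ^ q + T (fun k => MvPolynomial.X k) (fun k => z ^ (q + k)) = 1 := by
      refine PowerSeries.ext fun n => ?_
      rw [map_add, coeff_T, coeff_one]
      exact hinv n
    -- applying Dser i
    have h2 : T (fun k => (MvPolynomial.X k : A')) (fun k => Dser i (z ^ (q + k)))
        = T (fun k => MvPolynomial.X k * ((q + k : ℕ) : A')) (fun k => z ^ (q + k - 1))
            * Dser i z := by
      rw [T_mul,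
        T_congr (b := fun k => (MvPolynomial.X k : A'))
          (g := fun k => PowerSeries.C (R := A') ((q + k : ℕ) : A') * (z ^ (q + k - 1) * Dser i z))
          (fun _ _ => rfl)
          (fun k hk => Dser_pow i z (q + k) (by omega)),
        T_C_inner]
    have hA : PowerSeries.C (R := A') ((q : ℕ) : A') * (z ^ (q - 1) * Dser i z)
        + (PowerSeries.X ^ i * z ^ (q + i)
          + T (fun k => MvPolynomial.X k * ((q + k : ℕ) : A')) (fun k => z ^ (q + k - 1))
              * Dser i z) = 0 := by
      have hDS : Dser i (z ^ q + T (fun k => MvPolynomial.X k) (fun k => z ^ (q + k))) = 0 := by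
        rw [hS, Dser_one]
      rw [← hDS, Dser_add, Dser_T, T_single i hi]
      rw [Dser_pow i z q hq1, h2]
    -- applying X * dW
    have h3 : T (fun k => (MvPolynomial.X k : A')) (fun k => PowerSeries.X * dW (z ^ (q + k)))
        = T (fun k => MvPolynomial.X k * ((q + k : ℕ) : A')) (fun k => z ^ (q + k - 1))
            * (PowerSeries.X * dW z) := by
      rw [T_mul,
        T_congr (b := fun k => (MvPolynomial.X k : A'))
          (g := fun k => PowerSeries.C (R := A') ((q + k : ℕ) : A')
            * (z ^ (q + k - 1) * (PowerSeries.X * dW z)))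
          (fun _ _ => rfl)
          (fun k hk => XdW_pow z (q + k) (by omega)),
        T_C_inner]
    have hB : PowerSeries.C (R := A') ((q : ℕ) : A') * (z ^ (q - 1) * (PowerSeries.X * dW z))
        + (T (fun k => (k : A') * MvPolynomial.X k) (fun k => z ^ (q + k))
          + T (fun k => MvPolynomial.X k * ((q + k : ℕ) : A')) (fun k => z ^ (q + k - 1))
              * (PowerSeries.X * dW z)) = 0 := by
      have hDS : PowerSeries.X
          * dW (z ^ q + T (fun k => MvPolynomial.X k) (fun k => z ^ (q + k))) = 0 := by
        rw [hS, dW_one, mul_zero]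
      rw [← hDS, XdW_add, XdW_T]
      rw [XdW_pow z q hq1, h3]
    -- M * z computation pieces
    have hz1 : z ^ (q - 1) * z = z ^ q := by
      rw [← pow_succ]; congr 1; omega
    have hTz : T (fun k => MvPolynomial.X k * ((q + k : ℕ) : A')) (fun k => z ^ (q + k - 1)) * z
        = T (fun k => MvPolynomial.X k * ((q + k : ℕ) : A')) (fun k => z ^ (q + k)) := by
      rw [T_mul]
      exact T_congr (fun _ _ => rfl) (fun k hk => by rw [← pow_succ]; congr 1; omega)
    have hsub : T (fun k => MvPolynomial.X k * ((q + k : ℕ) : A')) (fun k => z ^ (q + k))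
          - T (fun k => (k : A') * MvPolynomial.X k) (fun k => z ^ (q + k))
        = PowerSeries.C (R := A') ((q : ℕ) : A')
            * T (fun k => MvPolynomial.X k) (fun k => z ^ (q + k)) := by
      rw [T_sub, C_mul_T]
      exact T_congr (fun k hk => by push_cast; ring) (fun _ _ => rfl)
    -- M * (z + X dW z) = C q
    have hMV : (PowerSeries.C (R := A') ((q : ℕ) : A') * z ^ (q - 1)
          + T (fun k => MvPolynomial.X k * ((q + k : ℕ) : A')) (fun k => z ^ (q + k - 1)))
          * (z + PowerSeries.X * dW z)
        = PowerSeries.C (R := A') ((q : ℕ) : A') := by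
      have hexp : (PowerSeries.C (R := A') ((q : ℕ) : A') * z ^ (q - 1)
            + T (fun k => MvPolynomial.X k * ((q + k : ℕ) : A')) (fun k => z ^ (q + k - 1)))
            * (z + PowerSeries.X * dW z)
          = PowerSeries.C (R := A') ((q : ℕ) : A') * (z ^ (q - 1) * z)
            + T (fun k => MvPolynomial.X k * ((q + k : ℕ) : A')) (fun k => z ^ (q + k - 1)) * z
            + (PowerSeries.C (R := A') ((q : ℕ) : A') * (z ^ (q - 1) * (PowerSeries.X * dW z))
              + T (fun k => MvPolynomial.X k * ((q + k : ℕ) : A')) (fun k => z ^ (q + k - 1))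
                  * (PowerSeries.X * dW z)) := by ring
      rw [hexp, hz1, hTz]
      linear_combination hB + hsub + PowerSeries.C (R := A') ((q : ℕ) : A') * hS
    have hCq : PowerSeries.C (R := A') ((q : ℕ) : A') * Dser i z
        = -(PowerSeries.X ^ i * z ^ (q + i) * (z + PowerSeries.X * dW z)) := by
      linear_combination (z + PowerSeries.X * dW z) * hA - Dser i z * hMV
    -- conclude
    have hmkD : (PowerSeries.mk fun l => MvPolynomial.pderiv i (g l)) = Dser i (z ^ p) := by
      refine PowerSeries.ext fun n => ?_
      rw [coeff_mk, coeff_Dser, hzp n]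
      split
      · next h => rw [h, hg0]
      · rfl
    have hkey : PowerSeries.C (R := A') (MvPolynomial.C ((p : ℂ) / q))
          * PowerSeries.C (R := A') ((q : ℕ) : A') = PowerSeries.C (R := A') ((p : ℕ) : A') := by
      rw [← map_natCast (MvPolynomial.C : ℂ →+* A') q,
        ← map_natCast (MvPolynomial.C : ℂ →+* A') p, ← map_mul, ← map_mul]
      rw [div_mul_cancel₀ _ hq0]
    have hzz : z ^ (p - 1) * z ^ (q + i) = z ^ (p + q + i - 1) := by
      rw [← pow_add]; congr 1; omega
    rw [hmkD, Dser_pow i z p hp1]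
    linear_combination (PowerSeries.C (R := A') (MvPolynomial.C ((p : ℂ) / q)) * z ^ (p - 1)) * hCq
      - (z ^ (p - 1) * Dser i z) * hkey
      - (PowerSeries.C (R := A') (MvPolynomial.C ((p : ℂ) / q)) * PowerSeries.X ^ i
          * (z + PowerSeries.X * dW z)) * hzz
  · -- Part 2
    classical
    have hDWq : Dser i (W ^ q) = PowerSeries.X ^ (q + i) := by
      refine PowerSeries.ext fun n => ?_
      rw [coeff_Dser, hWq n, coeff_X_pow]
      by_cases h1 : n < q
      · rw [if_pos h1, map_zero, if_neg (by omega)]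
      by_cases h2 : n = q
      · rw [if_neg h1, if_pos h2, MvPolynomial.pderiv_one, if_neg (by omega)]
      · rw [if_neg h1, if_neg h2, MvPolynomial.pderiv_X, Pi.single_apply]
        by_cases h3 : n = q + i
        · rw [if_pos (by omega : n - q = i), if_pos h3]
        · rw [if_neg (by omega), if_neg h3]
    have hWne : W ^ (q - 1) ≠ 0 := by
      apply pow_ne_zero
      intro h
      rw [h, map_zero] at hW1
      exact one_ne_zero hW1.symm
    have hXqi : PowerSeries.X ^ (q + i) = W ^ (q - 1) * (W ^ (i + 1) * Z ^ (q + i)) := by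
      rw [hWZ, mul_pow,
        show W ^ (q + i) = W ^ (q - 1) * W ^ (i + 1) by rw [← pow_add]; congr 1; omega,
        mul_assoc]
    have hcan : PowerSeries.C (R := A') ((q : ℕ) : A') * Dser i W = W ^ (i + 1) * Z ^ (q + i) := by
      apply mul_left_cancel₀ hWne
      calc W ^ (q - 1) * (PowerSeries.C (R := A') ((q : ℕ) : A') * Dser i W)
          = Dser i (W ^ q) := by rw [Dser_pow i W q hq1]; ring
        _ = PowerSeries.X ^ (q + i) := hDWq
        _ = W ^ (q - 1) * (W ^ (i + 1) * Z ^ (q + i)) := hXqi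
    have hkey2 : PowerSeries.C (R := A') (MvPolynomial.C (1 / (q : ℂ)))
        * PowerSeries.C (R := A') ((q : ℕ) : A') = 1 := by
      rw [← map_natCast (MvPolynomial.C : ℂ →+* A') q, ← map_mul, ← map_mul,
        one_div, inv_mul_cancel₀ hq0, map_one, map_one]
    show Dser i W = _
    linear_combination PowerSeries.C (R := A') (MvPolynomial.C (1 / (q : ℂ))) * hcan
      - Dser i W * hkey2
end
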